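/- Every finite semimodular lattice has a length-preserving embedding into a finite geometric lattice. -/

import Mathlib

/-- A lattice is (upper) semimodular if `x ⊓ y ⋖ x` implies `y ⋖ x ⊔ y`. -/
def Semimodular (L : Type*) [Lattice L] : Prop :=
  ∀ x y : L, x ⊓ y ⋖ x → y ⋖ x ⊔ y

namespace EmbedGeo

attribute [local instance] Classical.propDecidable

universe u
variable {L : Type u} [CompleteLattice L] [Fintype L]

/-- A saturated chain from `a` to `b` with list of steps `l`. -/
def SatCh (a b : L) (l : List L) : Prop :=
  List.Chain (· ⋖ ·) a l ∧ l.getLastD a = b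

lemma satCh_nil (a : L) : SatCh a a [] := ⟨List.Chain.nil, rfl⟩

lemma satCh_cons {a b w : L} {l : List L} (hw : a ⋖ w) (h : SatCh w b l) :
    SatCh a b (w :: l) := ⟨List.Chain.cons hw h.1, by rw [List.getLastD_cons]; exact h.2⟩

lemma satCh_cons_iff {a b c : L} {l : List L} :
    SatCh a b (c :: l) ↔ a ⋖ c ∧ SatCh c b l := by
  constructor
  · rintro ⟨hch, hlast⟩
    rw [List.Chain, List.chain_cons] at hch
    exact ⟨hch.1, hch.2, by rw [List.getLastD_cons] at hlast; exact hlast⟩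
  · rintro ⟨h1, h2⟩; exact satCh_cons h1 h2

lemma SatCh.le {a b : L} : ∀ {l : List L}, SatCh a b l → a ≤ b := by
  intro l
  induction l generalizing a with
  | nil => rintro ⟨-, rfl⟩; rfl
  | cons c t ih =>
    intro h
    rw [satCh_cons_iff] at h
    exact h.1.le.trans (ih h.2)

lemma SatCh.append {a b c : L} {l₁ l₂ : List L} (h₁ : SatCh a b l₁) (h₂ : SatCh b c l₂) :
    SatCh a c (l₁ ++ l₂) := by
  induction l₁ generalizing a with
  | nil => obtain ⟨-, rfl⟩ := h₁; exact h₂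
  | cons d t ih =>
    rw [satCh_cons_iff] at h₁
    exact satCh_cons h₁.1 (ih h₁.2)

lemma exists_covBy_le {a b : L} (h : a < b) : ∃ w, a ⋖ w ∧ w ≤ b := by
  classical
  obtain ⟨w, hw, hmin⟩ := Finset.exists_minimal
    (s := Finset.univ.filter fun z => a < z ∧ z ≤ b) ⟨b, by simp [h]⟩
  simp only [Finset.mem_filter, Finset.mem_univ, true_and] at hw
  refine ⟨w, ⟨hw.1, fun c hac hcw => ?_⟩, hw.2⟩
  exact hcw.not_ge (hmin (by simp [hac, hcw.le.trans hw.2]) hcw.le)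

lemma exists_satCh_aux : ∀ (k : ℕ) (a b : L),
    (Finset.univ.filter fun z => a < z).card = k → a ≤ b → ∃ l, SatCh a b l := by
  intro k
  induction k using Nat.strong_induction_on with
  | _ k IH =>
    intro a b hcard hab
    rcases eq_or_lt_of_le hab with rfl | hlt
    · exact ⟨[], satCh_nil a⟩
    · obtain ⟨w, hw, hwb⟩ := exists_covBy_le hlt
      have hsub : (Finset.univ.filter fun z => w < z) ⊂ (Finset.univ.filter fun z => a < z) := by
        constructor
        · intro z hz
          simp only [Finset.mem_filter, Finset.mem_univ, true_and] at hz ⊢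
          exact hw.lt.trans hz
        · intro hcon
          have := hcon (by simp [hw.lt] : w ∈ Finset.univ.filter fun z => a < z)
          simp at this
      obtain ⟨l, hl⟩ := IH _ (hcard ▸ Finset.card_lt_card hsub) w b rfl hwb
      exact ⟨w :: l, satCh_cons hw hl⟩

lemma exists_satCh {a b : L} (hab : a ≤ b) : ∃ l, SatCh a b l :=
  exists_satCh_aux _ a b rfl hab

/-- Jordan–Hölder for finite semimodular lattices: all saturated chains between two fixed
elements have the same length. -/
lemma jh (hL : Semimodular L) : ∀ (k : ℕ) {a b : L} {l₁ l₂ : List L},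
    SatCh a b l₁ → SatCh a b l₂ → l₁.length = k → l₂.length = k := by
  intro k
  induction k with
  | zero =>
    intro a b l₁ l₂ h1 h2 hlen
    obtain rfl : l₁ = [] := List.length_eq_zero_iff.mp hlen
    obtain rfl : b = a := h1.2.symm
    cases l₂ with
    | nil => rfl
    | cons d t =>
      rw [satCh_cons_iff] at h2
      exact absurd (h2.2.le) (not_le_of_gt h2.1.lt)
  | succ k IH =>
    intro a b l₁ l₂ h1 h2 hlen
    cases l₁ with
    | nil => simp at hlen
    | cons c t₁ =>
      rw [satCh_cons_iff] at h1
      obtain ⟨hac, ht₁⟩ := h1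
      cases l₂ with
      | nil =>
        obtain rfl : b = a := h2.2.symm
        exact absurd ht₁.le (not_le_of_gt hac.lt)
      | cons d t₂ =>
        rw [satCh_cons_iff] at h2
        obtain ⟨had, ht₂⟩ := h2
        simp only [List.length_cons] at hlen ⊢
        by_cases hcd : c = d
        · subst hcd
          rw [IH ht₁ ht₂ (by omega)]
        · -- the diamond step
          have hinf : c ⊓ d = a := by
            have h1 : a ≤ c ⊓ d := le_inf hac.le had.le
            have hne : ¬ c ≤ d := by
              intro hcled
              rcases lt_or_eq_of_le hcled with h'' | h''
              · exact had.2 hac.lt h''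
              · exact hcd h''
            have h2 : c ⊓ d < c := lt_of_le_of_ne inf_le_left (fun h => hne (h ▸ inf_le_right))
            rcases lt_or_eq_of_le h1 with h | h
            · exact absurd h2 (hac.2 h)
            · exact h.symm
          have hd_cov : d ⋖ c ⊔ d := hL c d (by rw [hinf]; exact hac)
          have hc_cov : c ⋖ c ⊔ d := by
            have := hL d c (by rw [inf_comm, hinf]; exact had)
            rwa [sup_comm d c] at this
          obtain ⟨E, hE⟩ := exists_satCh (sup_le ht₁.le ht₂.le : c ⊔ d ≤ b)
          have hcE : SatCh c b ((c ⊔ d) :: E) := satCh_cons hc_cov hE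
          have hdE : SatCh d b ((c ⊔ d) :: E) := satCh_cons hd_cov hE
          have e1 : ((c ⊔ d) :: E).length = k := IH ht₁ hcE (by omega)
          have e2 : t₂.length = k := IH hdE ht₂ e1
          omega

noncomputable def rk (x : L) : ℕ := (exists_satCh (bot_le : (⊥ : L) ≤ x)).choose.length

lemma rk_spec (x : L) : SatCh ⊥ x (exists_satCh (bot_le : (⊥ : L) ≤ x)).choose :=
  (exists_satCh bot_le).choose_spec

variable (hL : Semimodular L)
include hL

lemma satCh_length {x : L} {l : List L} (h : SatCh ⊥ x l) : l.length = rk x :=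
  jh hL (rk x) (rk_spec x) h rfl

lemma rk_bot : rk (⊥ : L) = 0 := (satCh_length hL (satCh_nil ⊥)).symm

lemma rk_of_satCh {x y : L} {l : List L} (h : SatCh x y l) : rk y = rk x + l.length := by
  have h0 := rk_spec x
  have h1 := satCh_length hL (h0.append h)
  have h2 : (exists_satCh (bot_le : (⊥ : L) ≤ x)).choose.length = rk x := rfl
  simp only [List.length_append] at h1
  omega

lemma rk_covBy {x y : L} (h : x ⋖ y) : rk y = rk x + 1 := by
  have : SatCh x y [y] := ⟨List.chain_cons.mpr ⟨h, List.Chain.nil⟩, rfl⟩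
  simpa using rk_of_satCh hL this

lemma rk_lt {x y : L} (h : x < y) : rk x < rk y := by
  obtain ⟨l, hl⟩ := exists_satCh h.le
  have hlen := rk_of_satCh hL hl
  cases l with
  | nil =>
    simp only [SatCh, List.getLastD_nil] at hl
    exact absurd hl.2 h.ne
  | cons c t => simp only [List.length_cons] at hlen; omega

lemma rk_mono {x y : L} (h : x ≤ y) : rk x ≤ rk y := by
  rcases eq_or_lt_of_le h with rfl | h
  · rfl
  · exact (rk_lt hL h).le

lemma rk_eq_zero {x : L} (h : rk x = 0) : x = ⊥ := by
  by_contra hx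
  have : (⊥ : L) < x := bot_lt_iff_ne_bot.mpr hx
  have := rk_lt hL this
  rw [rk_bot hL] at this
  omega

lemma rk_sup_chain : ∀ (l : List L) (a y : L), List.Chain (· ⋖ ·) a l →
    rk (l.getLastD a ⊔ y) ≤ rk (a ⊔ y) + l.length := by
  intro l
  induction l with
  | nil => intro a y _; simp
  | cons c t ih =>
    intro a y hch
    rw [List.Chain, List.chain_cons] at hch
    obtain ⟨hac, hct⟩ := hch
    rw [List.getLastD_cons]
    have hmain : rk (c ⊔ y) ≤ rk (a ⊔ y) + 1 := by
      by_cases hc : c ≤ a ⊔ y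
      · have : c ⊔ y = a ⊔ y :=
          le_antisymm (sup_le hc le_sup_right) (sup_le_sup_right hac.le y)
        rw [this]; omega
      · have hinf : c ⊓ (a ⊔ y) = a := by
          have h1 : a ≤ c ⊓ (a ⊔ y) := le_inf hac.le le_sup_left
          have h2 : c ⊓ (a ⊔ y) < c :=
            lt_of_le_of_ne inf_le_left (fun h => hc (h ▸ inf_le_right))
          rcases lt_or_eq_of_le h1 with h | h
          · exact absurd h2 (hac.2 h)
          · exact h.symm
        have hcov : (a ⊔ y) ⋖ c ⊔ (a ⊔ y) := hL c (a ⊔ y) (by rw [hinf]; exact hac)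
        have heq : c ⊔ (a ⊔ y) = c ⊔ y := by
          rw [← sup_assoc, sup_eq_left.mpr hac.le]
        rw [heq] at hcov
        rw [rk_covBy hL hcov]
    have := ih c y hct
    simp only [List.length_cons]
    omega

lemma rk_submod (x y : L) : rk (x ⊔ y) + rk (x ⊓ y) ≤ rk x + rk y := by
  obtain ⟨l, hl⟩ := exists_satCh (inf_le_left : x ⊓ y ≤ x)
  have hx : rk x = rk (x ⊓ y) + l.length := rk_of_satCh hL hl
  have := rk_sup_chain hL l (x ⊓ y) y hl.1
  rw [hl.2] at this
  have hcancel : (x ⊓ y) ⊔ y = y := sup_eq_right.mpr inf_le_right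
  rw [hcancel] at this
  omega

lemma rk_sup_le (x y : L) : rk (x ⊔ y) ≤ rk x + rk y := by
  have := rk_submod hL x y
  omega

lemma rk_finsetSup_le (C : Finset L) : rk (C.sup id) ≤ ∑ y ∈ C, rk y := by
  classical
  induction C using Finset.induction_on with
  | empty => simp [rk_bot hL]
  | insert a s ha ih =>
    rw [Finset.sup_insert, Finset.sum_insert ha]
    exact le_trans (rk_sup_le hL a (s.sup id)) (by omega)

end EmbedGeo

namespace EmbedGeo

set_option linter.unusedSectionVars false

attribute [local instance] Classical.propDecidable

universe u
variable {L : Type u} [CompleteLattice L] [Fintype L]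

/-- The expanded ground set: `rk x` parallel copies of each element `x`. -/
abbrev E (L : Type u) [CompleteLattice L] [Fintype L] : Type u := Σ x : L, Fin (rk x)

/-- One candidate value for the expansion rank. -/
noncomputable def g (A : Finset L) (S : Finset (E L)) : ℕ :=
  rk (A.sup id) + (S.filter fun e => e.1 ∉ A).card

/-- The rank function of the expansion matroid. -/
noncomputable def ρ (S : Finset (E L)) : ℕ :=
  Finset.univ.inf' Finset.univ_nonempty (fun A : Finset L => g A S)

lemma ρ_le (A : Finset L) (S : Finset (E L)) : ρ S ≤ g A S :=
  Finset.inf'_le _ (Finset.mem_univ A)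

lemma le_ρ {n : ℕ} {S : Finset (E L)} (h : ∀ A : Finset L, n ≤ g A S) : n ≤ ρ S :=
  Finset.le_inf' _ _ fun A _ => h A

lemma ρ_exists (S : Finset (E L)) : ∃ A : Finset L, ρ S = g A S := by
  obtain ⟨A, -, hA⟩ := Finset.exists_mem_eq_inf' (Finset.univ_nonempty) (fun A : Finset L => g A S)
  exact ⟨A, hA⟩

lemma ρ_mono {S T : Finset (E L)} (h : S ⊆ T) : ρ S ≤ ρ T := by
  obtain ⟨A, hA⟩ := ρ_exists T
  refine le_trans (ρ_le A S) ?_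
  rw [hA]
  exact Nat.add_le_add_left (Finset.card_le_card (Finset.filter_subset_filter _ h)) _

lemma ρ_insert_le (e : E L) (S : Finset (E L)) : ρ (insert e S) ≤ ρ S + 1 := by
  obtain ⟨A, hA⟩ := ρ_exists S
  refine le_trans (ρ_le A _) ?_
  rw [hA]
  unfold g
  have : ((insert e S).filter fun x => x.1 ∉ A).card ≤ (S.filter fun x => x.1 ∉ A).card + 1 := by
    rw [Finset.filter_insert]
    split
    · exact Finset.card_insert_le _ _
    · omega
  omega

lemma ρ_insert_cases (e : E L) (S : Finset (E L)) :
    ρ (insert e S) = ρ S ∨ ρ (insert e S) = ρ S + 1 := by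
  have h1 := ρ_mono (Finset.subset_insert e S)
  have h2 := ρ_insert_le e S
  omega

/-- All the parallel copies of the elements of `C`. -/
noncomputable def Fib (C : Finset L) : Finset (E L) := C.sigma fun _ => Finset.univ

lemma mem_Fib {C : Finset L} {e : E L} : e ∈ Fib C ↔ e.1 ∈ C := by
  simp [Fib, Finset.mem_sigma]

lemma card_Fib (C : Finset L) : (Fib C).card = ∑ y ∈ C, rk y := by
  simp [Fib, Finset.card_sigma]

lemma filter_Fib (A C : Finset L) :
    ((Fib C).filter fun e => e.1 ∉ A) = Fib (C \ A) := by
  ext e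
  simp [mem_Fib, Finset.mem_filter, Finset.mem_sdiff]

lemma g_Fib (A C : Finset L) : g A (Fib C) = rk (A.sup id) + ∑ y ∈ C \ A, rk y := by
  rw [g, filter_Fib, card_Fib]

variable (hL : Semimodular L)
include hL

lemma rk_bound (A C : Finset L) :
    rk ((A ∪ C).sup id) ≤ rk (A.sup id) + ∑ y ∈ C \ A, rk y := by
  have h1 : (A ∪ C).sup id = A.sup id ⊔ (C \ A).sup id := by
    rw [← Finset.sup_union, Finset.union_sdiff_self_eq_union]
  rw [h1]
  exact le_trans (rk_sup_le hL _ _) (Nat.add_le_add_left (rk_finsetSup_le hL _) _)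

lemma ρ_Fib (C : Finset L) : ρ (Fib C) = rk (C.sup id) := by
  refine le_antisymm (le_trans (ρ_le C _) ?_) (le_ρ fun A => ?_)
  · rw [g_Fib]; simp
  · rw [g_Fib]
    refine le_trans ?_ (rk_bound hL A C)
    exact rk_mono hL (Finset.sup_mono Finset.subset_union_right)

lemma ρ_empty : ρ (∅ : Finset (E L)) = 0 := by
  have h : (Fib (∅ : Finset L) : Finset (E L)) = ∅ := by
    ext e; simp [mem_Fib]
  have := ρ_Fib hL (∅ : Finset L)
  rw [h] at this
  rw [this]
  simp [rk_bot hL]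

omit hL in
lemma card_filter_union_inter (S T : Finset (E L)) (A B : Finset L) :
    ((S ∪ T).filter fun e => e.1 ∉ A ∪ B).card + ((S ∩ T).filter fun e => e.1 ∉ A ∩ B).card
      ≤ (S.filter fun e => e.1 ∉ A).card + (T.filter fun e => e.1 ∉ B).card := by
  have e1 : ((S ∪ T).filter fun e => e.1 ∉ A ∪ B)
      = Finset.univ.filter fun e => e ∈ S ∪ T ∧ e.1 ∉ A ∪ B := by ext e; simp
  have e2 : ((S ∩ T).filter fun e => e.1 ∉ A ∩ B)
      = Finset.univ.filter fun e => e ∈ S ∩ T ∧ e.1 ∉ A ∩ B := by ext e; simp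
  have e3 : (S.filter fun e => e.1 ∉ A)
      = Finset.univ.filter fun e => e ∈ S ∧ e.1 ∉ A := by ext e; simp
  have e4 : (T.filter fun e => e.1 ∉ B)
      = Finset.univ.filter fun e => e ∈ T ∧ e.1 ∉ B := by ext e; simp
  rw [e1, e2, e3, e4, Finset.card_filter, Finset.card_filter, Finset.card_filter,
    Finset.card_filter, ← Finset.sum_add_distrib, ← Finset.sum_add_distrib]
  apply Finset.sum_le_sum
  intro e _
  by_cases h1 : e ∈ S <;> by_cases h2 : e ∈ T <;>
    by_cases h3 : e.1 ∈ A <;> by_cases h4 : e.1 ∈ B <;>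
    simp [h1, h2, h3, h4, Finset.mem_union, Finset.mem_inter]

lemma ρ_submod (S T : Finset (E L)) : ρ (S ∪ T) + ρ (S ∩ T) ≤ ρ S + ρ T := by
  obtain ⟨A, hA⟩ := ρ_exists S
  obtain ⟨B, hB⟩ := ρ_exists T
  have h1 : ρ (S ∪ T) ≤ g (A ∪ B) (S ∪ T) := ρ_le _ _
  have h2 : ρ (S ∩ T) ≤ g (A ∩ B) (S ∩ T) := ρ_le _ _
  have hrk : rk ((A ∪ B).sup id) + rk ((A ∩ B).sup id) ≤ rk (A.sup id) + rk (B.sup id) := by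
    have hsup : (A ∪ B).sup id = A.sup id ⊔ B.sup id := Finset.sup_union
    have hle : (A ∩ B).sup id ≤ A.sup id ⊓ B.sup id :=
      le_inf (Finset.sup_mono Finset.inter_subset_left)
        (Finset.sup_mono Finset.inter_subset_right)
    calc rk ((A ∪ B).sup id) + rk ((A ∩ B).sup id)
        ≤ rk (A.sup id ⊔ B.sup id) + rk (A.sup id ⊓ B.sup id) := by
          rw [hsup]; exact Nat.add_le_add_left (rk_mono hL hle) _
      _ ≤ rk (A.sup id) + rk (B.sup id) := rk_submod hL _ _
  have hcard := card_filter_union_inter S T A B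
  unfold g at h1 h2
  rw [hA, hB]
  unfold g
  omega

lemma insert_rank_stable {e : E L} {S T : Finset (E L)}
    (h : ρ (insert e S) = ρ S) (hST : S ⊆ T) : ρ (insert e T) = ρ T := by
  have hsub := ρ_submod hL (insert e S) T
  have hu : insert e S ∪ T = insert e T := by
    rw [Finset.insert_union, Finset.union_eq_right.mpr hST]
  have hi : S ⊆ insert e S ∩ T :=
    Finset.subset_inter (Finset.subset_insert e S) hST
  have h3 := ρ_mono (L := L) hi
  have h4 := ρ_mono (Finset.subset_insert e T)
  rw [hu] at hsub
  omega

/-- The closure of a set in the expansion matroid. -/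
noncomputable def clS (S : Finset (E L)) : Finset (E L) :=
  Finset.univ.filter fun e => ρ (insert e S) = ρ S

omit hL in
lemma subset_clS (S : Finset (E L)) : S ⊆ clS S := by
  intro e he
  simp only [clS, Finset.mem_filter, Finset.mem_univ, true_and]
  rw [Finset.insert_eq_self.mpr he]

lemma ρ_clS (S : Finset (E L)) : ρ (clS S) = ρ S := by
  have aux : ∀ T : Finset (E L), (∀ e ∈ T, ρ (insert e S) = ρ S) → ρ (S ∪ T) = ρ S := by
    intro T
    induction T using Finset.induction_on with
    | empty => intro _; rw [Finset.union_empty]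
    | insert b t ha ih =>
      intro hmem
      rw [Finset.union_insert]
      have h1 : ρ (S ∪ t) = ρ S := ih fun e he => hmem e (Finset.mem_insert_of_mem he)
      have h2 := insert_rank_stable hL (hmem b (Finset.mem_insert_self b t))
        (Finset.subset_union_left (s₂ := t))
      rw [h2, h1]
  have h := aux (clS S) (fun e he => by
    simp only [clS, Finset.mem_filter, Finset.mem_univ, true_and] at he; exact he)
  rwa [Finset.union_eq_right.mpr (subset_clS S)] at h

/-- A flat of the expansion matroid. -/
def IsFlat (S : Finset (E L)) : Prop := ∀ e ∉ S, ρ (insert e S) = ρ S + 1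

lemma isFlat_clS (S : Finset (E L)) : IsFlat (clS S) := by
  intro e he
  simp only [clS, Finset.mem_filter, Finset.mem_univ, true_and] at he
  have h1 : ρ (insert e S) = ρ S + 1 := by
    rcases ρ_insert_cases e S with h | h
    · exact absurd h he
    · exact h
  rcases ρ_insert_cases e (clS S) with h | h
  · exfalso
    have hsub : insert e S ⊆ insert e (clS S) :=
      Finset.insert_subset_insert e (subset_clS S)
    have := ρ_mono hsub
    rw [h, ρ_clS hL] at this
    omega
  · exact h

lemma clS_subset_flat {S F : Finset (E L)} (hSF : S ⊆ F) (hF : IsFlat F) : clS S ⊆ F := by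
  intro e he
  simp only [clS, Finset.mem_filter, Finset.mem_univ, true_and] at he
  by_contra hef
  have h1 := hF e hef
  have h2 := insert_rank_stable hL he hSF
  omega

omit hL in
lemma isFlat_univ : IsFlat (Finset.univ : Finset (E L)) := by
  intro e he
  exact absurd (Finset.mem_univ e) he

lemma isFlat_inter {F G : Finset (E L)} (hF : IsFlat F) (hG : IsFlat G) :
    IsFlat (F ∩ G) := by
  intro e he
  rcases ρ_insert_cases e (F ∩ G) with h | h
  · exfalso
    rw [Finset.mem_inter, not_and_or] at he
    rcases he with he | he
    · have := insert_rank_stable hL h (Finset.inter_subset_left (s₂ := G))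
      have h2 := hF e he
      omega
    · have := insert_rank_stable hL h (Finset.inter_subset_right (s₁ := F))
      have h2 := hG e he
      omega
  · exact h

end EmbedGeo

namespace EmbedGeo

set_option linter.unusedSectionVars false

attribute [local instance] Classical.propDecidable

universe u
variable {L : Type u} [CompleteLattice L] [Fintype L]

/-- The geometric lattice: flats of the expansion matroid. -/
abbrev Flats (L : Type u) [CompleteLattice L] [Fintype L] : Type u :=
  {S : Finset (E L) // IsFlat S}

variable (hL : Semimodular L)

/-- The lattice structure on flats. -/
noncomputable def flatsLattice : Lattice (Flats L) :=
  { Subtype.partialOrder _ with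
    sup := fun F G => ⟨clS (F.1 ∪ G.1), isFlat_clS hL _⟩
    inf := fun F G => ⟨F.1 ∩ G.1, isFlat_inter hL F.2 G.2⟩
    le_sup_left := fun F G => show F.1 ⊆ clS (F.1 ∪ G.1) from
      Finset.subset_union_left.trans (subset_clS _)
    le_sup_right := fun F G => show G.1 ⊆ clS (F.1 ∪ G.1) from
      Finset.subset_union_right.trans (subset_clS _)
    sup_le := fun F G H h1 h2 => show clS (F.1 ∪ G.1) ⊆ H.1 from
      clS_subset_flat hL (Finset.union_subset h1 h2) H.2
    inf_le_left := fun F G => show F.1 ∩ G.1 ⊆ F.1 from Finset.inter_subset_left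
    inf_le_right := fun F G => show F.1 ∩ G.1 ⊆ G.1 from Finset.inter_subset_right
    le_inf := fun F G H h1 h2 => show F.1 ⊆ G.1 ∩ H.1 from Finset.subset_inter h1 h2 }

/-- The bounded order structure on flats. -/
noncomputable def flatsBounded : BoundedOrder (Flats L) where
  top := ⟨Finset.univ, isFlat_univ⟩
  le_top F := show F.1 ⊆ Finset.univ from Finset.subset_univ _
  bot := ⟨clS ∅, isFlat_clS hL _⟩
  bot_le F := show clS ∅ ⊆ F.1 from clS_subset_flat hL (Finset.empty_subset _) F.2

/-- The canonical flat associated to a lattice element. -/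
noncomputable def Sx (x : L) : Finset (E L) := Fib (Finset.univ.filter (· ≤ x))

lemma mem_Sx {x : L} {e : E L} : e ∈ Sx x ↔ e.1 ≤ x := by
  simp [Sx, mem_Fib]

lemma Sx_mono {x y : L} (h : x ≤ y) : Sx x ⊆ Sx y := by
  intro e he
  rw [mem_Sx] at he ⊢
  exact he.trans h

lemma Sx_inter (x y : L) : Sx (x ⊓ y) = Sx x ∩ Sx y := by
  ext e
  simp [mem_Sx, le_inf_iff]

lemma sup_filter_le (x : L) : ((Finset.univ.filter (· ≤ x)).sup id) = x := by
  apply le_antisymm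
  · apply Finset.sup_le
    intro y hy
    simpa using (Finset.mem_filter.mp hy).2
  · exact Finset.le_sup (f := id) (by simp : x ∈ Finset.univ.filter (· ≤ x))

include hL

lemma ρ_Sx (x : L) : ρ (Sx x) = rk x := by
  rw [Sx, ρ_Fib hL, sup_filter_le]

lemma ρ_Sx_union (x y : L) : ρ (Sx x ∪ Sx y) = rk (x ⊔ y) := by
  have h : Sx x ∪ Sx y
      = Fib ((Finset.univ.filter (· ≤ x)) ∪ (Finset.univ.filter (· ≤ y))) := by
    ext e
    simp [Sx, mem_Fib]
  rw [h, ρ_Fib hL, Finset.sup_union, sup_filter_le, sup_filter_le]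

lemma isFlat_Sx (x : L) : IsFlat (Sx x) := by
  intro e he
  rw [mem_Sx] at he
  rw [ρ_Sx hL]
  refine le_antisymm (le_trans (ρ_insert_le _ _) (by rw [ρ_Sx hL])) (le_ρ fun A => ?_)
  set C := Finset.univ.filter (· ≤ x) with hC
  have heC : e.1 ∉ C := by simp [hC, he]
  have hxmem : x ∈ C := by simp [hC]
  unfold g
  rw [show (Sx x : Finset (E L)) = Fib C from rfl, Finset.filter_insert]
  rw [filter_Fib]
  split_ifs with hA
  · -- e.1 ∈ A
    rw [card_Fib]
    have h1 : x ⊔ e.1 ≤ (A ∪ C).sup id :=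
      sup_le (Finset.le_sup (f := id) (Finset.mem_union_right A hxmem))
        (Finset.le_sup (f := id) (Finset.mem_union_left C hA))
    have h2 : rk x + 1 ≤ rk (x ⊔ e.1) := rk_lt hL (left_lt_sup.mpr he)
    have h3 := rk_mono hL h1
    have h4 := rk_bound hL A C
    omega
  · -- e.1 ∉ A
    have hnotmem : e ∉ Fib (C \ A) := by
      rw [mem_Fib, Finset.mem_sdiff]
      exact fun h => heC h.1
    rw [Finset.card_insert_of_notMem hnotmem, card_Fib]
    have h1 : rk x ≤ rk ((A ∪ C).sup id) :=
      rk_mono hL (Finset.le_sup (f := id) (Finset.mem_union_right A hxmem))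
    have h2 := rk_bound hL A C
    omega

lemma Sx_sup_eq (x : L) : (Sx x).sup (fun e : E L => e.1) = x := by
  apply le_antisymm
  · apply Finset.sup_le
    intro e he
    rw [mem_Sx] at he
    exact he
  · rcases eq_or_ne x ⊥ with rfl | hx
    · exact bot_le
    · have hrk : 0 < rk x := Nat.pos_of_ne_zero fun h => hx (rk_eq_zero hL h)
      exact Finset.le_sup (f := fun e : E L => e.1) (b := ⟨x, ⟨0, hrk⟩⟩)
        (mem_Sx.mpr le_rfl)

lemma clS_Sx_union (x y : L) : clS (Sx x ∪ Sx y) = Sx (x ⊔ y) := by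
  apply Finset.Subset.antisymm
  · exact clS_subset_flat hL
      (Finset.union_subset (Sx_mono le_sup_left) (Sx_mono le_sup_right)) (isFlat_Sx hL _)
  · intro e he
    simp only [clS, Finset.mem_filter, Finset.mem_univ, true_and]
    refine le_antisymm ?_ (ρ_mono (Finset.subset_insert _ _))
    have h1 : insert e (Sx x ∪ Sx y) ⊆ Sx (x ⊔ y) :=
      Finset.insert_subset he
        (Finset.union_subset (Sx_mono le_sup_left) (Sx_mono le_sup_right))
    calc ρ (insert e (Sx x ∪ Sx y)) ≤ ρ (Sx (x ⊔ y)) := ρ_mono h1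
      _ = rk (x ⊔ y) := ρ_Sx hL _
      _ = ρ (Sx x ∪ Sx y) := (ρ_Sx_union hL x y).symm

omit hL in
lemma exists_ltSeries_of_satCh {a b : L} : ∀ {l : List L}, SatCh a b l →
    ∃ p : LTSeries L, p.length = l.length ∧ p.head = a ∧ p.last = b := by
  intro l
  induction l generalizing a with
  | nil =>
    rintro ⟨-, h⟩
    exact ⟨RelSeries.singleton _ a, by simp [RelSeries.singleton], rfl,
      by simpa [RelSeries.last_singleton] using h⟩
  | cons c t ih =>
    intro h
    rw [satCh_cons_iff] at h
    obtain ⟨p, hlen, hhead, hlast⟩ := ih h.2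
    refine ⟨p.cons a (by rw [hhead]; exact h.1.lt), ?_, ?_, ?_⟩
    · simp [hlen]
    · simp
    · simp [hlast]

end EmbedGeo

/-- If a preorder admits a longest chain of length `n`, its Krull dimension is `n`. -/
lemma krullDim_eq_of_aux {α : Type*} [Preorder α] {n : ℕ} (p : LTSeries α)
    (hp : p.length = n) (h : ∀ q : LTSeries α, q.length ≤ n) :
    Order.krullDim α = n := by
  apply le_antisymm
  · apply iSup_le
    intro q
    exact_mod_cast h q
  · rw [← hp]
    exact Order.LTSeries.length_le_krullDim p

lemma supIrred_exists_of_sup {α : Type*} [Lattice α] [OrderBot α] {a : α} (ha : SupIrred a)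
    {ι : Type*} {s : Finset ι} {f : ι → α} (h : a = s.sup f) : ∃ b ∈ s, a = f b := by
  classical
  induction s using Finset.induction_on generalizing a with
  | empty =>
    rw [Finset.sup_empty] at h
    exact absurd (h ▸ isMin_bot) ha.1
  | insert b t hb ih =>
    rw [Finset.sup_insert] at h
    rcases ha.2 h.symm with h1 | h1
    · exact ⟨b, Finset.mem_insert_self _ _, h1.symm⟩
    · obtain ⟨c, hc, hcf⟩ := ih (h1 ▸ ha) h1.symm
      exact ⟨c, Finset.mem_insert_of_mem hc, hcf⟩

attribute [irreducible] EmbedGeo.rk EmbedGeo.ρ EmbedGeo.g EmbedGeo.Fib EmbedGeo.clS EmbedGeo.Sx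

set_option maxHeartbeats 1000000 in
open EmbedGeo in
/-- Every finite semimodular lattice has a length-preserving lattice embedding into a
finite geometric lattice. -/
theorem embed_geometric (L : Type u) [CompleteLattice L] [Fintype L]
    (hL : Semimodular L) :
    ∃ (K : Type u) (_ : CompleteLattice K) (_ : Fintype K),
      Semimodular K ∧
      -- `K` is geometric: every nonzero join-irreducible element is an atom
      (∀ a : K, SupIrred a → IsAtom a) ∧
      -- a length-preserving lattice embedding
      (∃ f : LatticeHom L K, Function.Injective f) ∧
      Order.krullDim K = Order.krullDim L := by
  classical
  letI ft : Fintype (Flats L) := Fintype.ofFinite _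
  letI lat : Lattice (Flats L) := flatsLattice hL
  letI bdd : BoundedOrder (Flats L) := flatsBounded hL
  letI compl : CompleteLattice (Flats L) := @Fintype.toCompleteLattice (Flats L) ft lat bdd
  -- value-level descriptions of the lattice operations
  have hsupval : ∀ F G : Flats L, (F ⊔ G).1 = clS (F.1 ∪ G.1) := fun _ _ => rfl
  have hinfval : ∀ F G : Flats L, (F ⊓ G).1 = F.1 ∩ G.1 := fun _ _ => rfl
  have hbotval : (⊥ : Flats L).1 = clS (∅ : Finset (E L)) := rfl
  have hleval : ∀ F G : Flats L, F ≤ G ↔ F.1 ⊆ G.1 := fun _ _ => Iff.rfl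
  have hssub : ∀ F G : Flats L, F < G → F.1 ⊂ G.1 := by
    intro F G h
    rw [Finset.ssubset_iff_subset_ne]
    exact ⟨(hleval F G).1 h.le, fun hc => h.ne (Subtype.ext hc)⟩
  have hstrict : ∀ F G : Flats L, F < G → ρ F.1 < ρ G.1 := by
    intro F G h
    obtain ⟨e, heG, heF⟩ := Finset.exists_of_ssubset (hssub F G h)
    have h1 := F.2 e heF
    have h2 : ρ (insert e F.1) ≤ ρ G.1 :=
      ρ_mono (Finset.insert_subset heG (hssub F G h).subset)
    omega
  set n := rk (⊤ : L) with hn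
  have hρle : ∀ F : Flats L, ρ F.1 ≤ n := by
    intro F
    have h1 : F.1 ⊆ Sx (⊤ : L) := fun e _ => mem_Sx.mpr le_top
    calc ρ F.1 ≤ ρ (Sx (⊤ : L)) := ρ_mono h1
      _ = rk (⊤ : L) := ρ_Sx hL ⊤
  have hcov1 : ∀ F G : Flats L, F ⋖ G → ρ G.1 = ρ F.1 + 1 := by
    intro F G h
    obtain ⟨e, heG, heF⟩ := Finset.exists_of_ssubset (hssub F G h.lt)
    set H : Flats L := ⟨clS (insert e F.1), isFlat_clS hL _⟩ with hH
    have hFH : F < H := by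
      rw [lt_iff_le_and_ne]
      constructor
      · exact (hleval F H).2 ((Finset.subset_insert e F.1).trans (subset_clS _))
      · intro hc
        apply heF
        rw [hc]
        exact subset_clS _ (Finset.mem_insert_self e F.1)
    have hHG : H ≤ G := (hleval H G).2
      (clS_subset_flat hL (Finset.insert_subset heG ((hleval F G).1 h.le)) G.2)
    have hHG' : H = G := by
      rcases lt_or_eq_of_le hHG with h' | h'
      · exact absurd h' (h.2 hFH)
      · exact h'
    rw [← hHG']
    show ρ (clS (insert e F.1)) = ρ F.1 + 1
    rw [ρ_clS hL]
    exact F.2 e heF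
  have hcov2 : ∀ F G : Flats L, F < G → ρ G.1 = ρ F.1 + 1 → F ⋖ G := by
    intro F G hlt heq
    refine ⟨hlt, fun H h1 h2 => ?_⟩
    have := hstrict _ _ h1
    have := hstrict _ _ h2
    omega
  -- the embedding
  have hmapsup : ∀ x y : L, (⟨Sx (x ⊔ y), isFlat_Sx hL _⟩ : Flats L)
      = ⟨Sx x, isFlat_Sx hL x⟩ ⊔ ⟨Sx y, isFlat_Sx hL y⟩ := by
    intro x y
    apply Subtype.ext
    rw [hsupval]
    exact (clS_Sx_union hL x y).symm
  have hmapinf : ∀ x y : L, (⟨Sx (x ⊓ y), isFlat_Sx hL _⟩ : Flats L)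
      = ⟨Sx x, isFlat_Sx hL x⟩ ⊓ ⟨Sx y, isFlat_Sx hL y⟩ := by
    intro x y
    apply Subtype.ext
    rw [hinfval]
    exact Sx_inter x y
  set f : LatticeHom L (Flats L) :=
    ⟨⟨fun x => ⟨Sx x, isFlat_Sx hL x⟩, fun x y => hmapsup x y⟩, fun x y => hmapinf x y⟩
    with hf
  have hinj : Function.Injective f := by
    intro x y hxy
    have hval : Sx x = Sx y := congrArg Subtype.val hxy
    have := congrArg (fun S : Finset (E L) => S.sup (fun e : E L => e.1)) hval
    simpa [Sx_sup_eq hL] using this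
  refine ⟨Flats L, compl, ft, ?_, ?_, ⟨f, hinj⟩, ?_⟩
  · -- semimodularity of K
    intro F G h
    have h1 : ρ F.1 = ρ (F.1 ∩ G.1) + 1 := by
      have := hcov1 _ _ h
      rw [hinfval] at this
      omega
    have hFns : ¬ F ≤ G := by
      intro hc
      have h2 : F ⊓ G = F := inf_eq_left.mpr hc
      have h3 := h.lt
      rw [h2] at h3
      exact lt_irrefl F h3
    have hlt2 : G < F ⊔ G := by
      rcases lt_or_eq_of_le (le_sup_right : G ≤ F ⊔ G) with h' | h'
      · exact h'
      · exact absurd (le_sup_left.trans h'.ge) hFns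
    have hsubm := ρ_submod hL F.1 G.1
    have hclval : ρ ((F ⊔ G).1) = ρ (F.1 ∪ G.1) := by
      rw [hsupval]
      exact ρ_clS hL _
    have hlow := hstrict _ _ hlt2
    exact hcov2 _ _ hlt2 (by omega)
  · -- geometric: sup-irreducibles are atoms
    intro F hF
    refine ⟨fun hc => hF.1 (hc ▸ isMin_bot), fun G hG => ?_⟩
    · 
      have hFsup : F = (F.1.attach).sup
          (fun e => (⟨clS {e.1}, isFlat_clS hL _⟩ : Flats L)) := by
        apply le_antisymm
        · apply (hleval _ _).2
          intro a ha
          have h1 : (⟨clS {a}, isFlat_clS hL _⟩ : Flats L)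
              ≤ (F.1.attach).sup (fun e => (⟨clS {e.1}, isFlat_clS hL _⟩ : Flats L)) :=
            Finset.le_sup (f := fun e : {x // x ∈ F.1} =>
              (⟨clS {e.1}, isFlat_clS hL _⟩ : Flats L)) (Finset.mem_attach _ ⟨a, ha⟩)
          exact (hleval _ _).1 h1 (subset_clS _ (Finset.mem_singleton_self a))
        · apply Finset.sup_le
          rintro ⟨a, ha⟩ -
          exact (hleval _ _).2 (clS_subset_flat hL (Finset.singleton_subset_iff.mpr ha) F.2)
      obtain ⟨b, -, hFb⟩ := supIrred_exists_of_sup hF hFsup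
      have hρ1 : ρ F.1 ≤ 1 := by
        rw [hFb]
        show ρ (clS {b.1}) ≤ 1
        have h1 : ρ (clS ({b.1} : Finset (E L))) = ρ ({b.1} : Finset (E L)) := ρ_clS hL _
        have h2 : ρ ({b.1} : Finset (E L)) ≤ ρ (∅ : Finset (E L)) + 1 := by
          simpa using ρ_insert_le b.1 (∅ : Finset (E L))
        have h3 := ρ_empty hL
        omega
      have hG0 : ρ G.1 = 0 := by
        have := hstrict _ _ hG
        omega
      apply le_antisymm ?_ bot_le
      apply (hleval G ⊥).2
      rw [hbotval]
      intro a ha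
      simp only [clS, Finset.mem_filter, Finset.mem_univ, true_and]
      have h1 : ρ (insert a (∅ : Finset (E L))) ≤ ρ G.1 := by
        apply ρ_mono
        intro z hz
        simp only [Finset.mem_insert, Finset.notMem_empty, or_false] at hz
        rw [hz]
        exact ha
      have h2 := ρ_empty hL
      have h3 := ρ_mono (Finset.empty_subset (insert a (∅ : Finset (E L))))
      omega
  · -- equality of Krull dimensions
    obtain ⟨l, hl⟩ := exists_satCh (bot_le : (⊥ : L) ≤ ⊤)
    have hlen : l.length = n := satCh_length hL hl
    obtain ⟨p, hplen, hphead, hplast⟩ := exists_ltSeries_of_satCh hl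
    have hboundL : ∀ q : LTSeries L, q.length ≤ n := by
      intro q
      have hsm : StrictMono (rk : L → ℕ) := fun a b h => rk_lt hL h
      have h1 := LTSeries.head_add_length_le_nat (q.map _ hsm)
      have h2 : rk q.last ≤ n := rk_mono hL le_top
      simp only [LTSeries.head_map, LTSeries.last_map] at h1
      have h3 : (q.map _ hsm).length = q.length := rfl
      omega
    have hdimL : Order.krullDim L = (n : ℕ) := krullDim_eq_of_aux p (hplen.trans hlen) hboundL
    have hfmono : Monotone (f : L → Flats L) := fun a b hab => (hleval _ _).2 (Sx_mono hab)
    have hfstrict : StrictMono (f : L → Flats L) := hfmono.strictMono_of_injective hinj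
    have hboundK : ∀ q : LTSeries (Flats L), q.length ≤ n := by
      intro q
      have hsm : StrictMono (fun F : Flats L => ρ F.1) := fun a b h => hstrict a b h
      have h1 := LTSeries.head_add_length_le_nat (q.map _ hsm)
      have h2 : ρ q.last.1 ≤ n := hρle _
      simp only [LTSeries.head_map, LTSeries.last_map] at h1
      have h3 : (q.map _ hsm).length = q.length := rfl
      omega
    have hdimK : Order.krullDim (Flats L) = (n : ℕ) :=
      krullDim_eq_of_aux (p.map _ hfstrict) (hplen.trans hlen) hboundK
    exact hdimK.trans hdimL.symm
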